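/- Let n ∈ ℕ, s ≥ 0, and c, C > 0. Let Φ be an n × n real orthogonal matrix and let λ_{0,ℓ}, λ_{1,ℓ} (ℓ = 1,…,n) be reals with c·ℓ^{-s/2} ≤ |λ_{i,ℓ}| ≤ C for i = 0,1. Set C_i := Φ · diag(λ_{i,1}², …, λ_{i,n}²) · Φᵀ. Then (1/2)·[tr(C₁⁻¹ C₀ − I_n) + log det C₁ − log det C₀] ≤ (2C/c²) · Σ_{ℓ=1}^n ℓ^s |λ_{0,ℓ} − λ_{1,ℓ}|. -/

import Mathlib

open Matrix

lemma kl_term_bound (c C x y w P : ℝ) (hc : 0 < c) (hC : 0 < C) (hw : 0 < w)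
    (hP : w ^ 2 * P = 1)
    (hx : c * w ≤ |x|) (hxC : |x| ≤ C) (hy : c * w ≤ |y|) (hyC : |y| ≤ C) :
    (1 / 2) * (x ^ 2 / y ^ 2 - 1 + Real.log (y ^ 2) - Real.log (x ^ 2))
      ≤ (2 * C / c ^ 2) * (P * |x - y|) := by
  have hm : 0 < c * w := mul_pos hc hw
  have hax : (c * w) ^ 2 ≤ x ^ 2 := by nlinarith [sq_abs x, abs_nonneg x]
  have hay : (c * w) ^ 2 ≤ y ^ 2 := by nlinarith [sq_abs y, abs_nonneg y]
  have hxpos : 0 < x ^ 2 := lt_of_lt_of_le (by positivity) hax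
  have hypos : 0 < y ^ 2 := lt_of_lt_of_le (by positivity) hay
  have hlog : Real.log (y ^ 2) - Real.log (x ^ 2) ≤ y ^ 2 / x ^ 2 - 1 := by
    have h := Real.log_le_sub_one_of_pos (div_pos hypos hxpos)
    rwa [Real.log_div hypos.ne' hxpos.ne'] at h
  have habs : |x ^ 2 - y ^ 2| ≤ 2 * C * |x - y| := by
    have h1 : |x + y| ≤ 2 * C := (abs_add_le x y).trans (by linarith)
    calc |x ^ 2 - y ^ 2| = |x - y| * |x + y| := by
          rw [← abs_mul]; ring_nf
      _ ≤ |x - y| * (2 * C) := by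
          exact mul_le_mul_of_nonneg_left h1 (abs_nonneg _)
      _ = 2 * C * |x - y| := by ring
  have h1 : |x ^ 2 - y ^ 2| * (c * w) ^ 2 ≤ x ^ 2 * y ^ 2 := by
    rcases le_total (x ^ 2) (y ^ 2) with h | h
    · rw [abs_of_nonpos (by linarith)]; nlinarith
    · rw [abs_of_nonneg (by linarith)]; nlinarith
  have h2 : (x ^ 2 - y ^ 2) ^ 2 * (c * w) ^ 2 ≤ (2 * C * |x - y|) * (x ^ 2 * y ^ 2) := by
    calc (x ^ 2 - y ^ 2) ^ 2 * (c * w) ^ 2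
        = |x ^ 2 - y ^ 2| * (|x ^ 2 - y ^ 2| * (c * w) ^ 2) := by
          rw [← sq_abs (x ^ 2 - y ^ 2)]; ring
      _ ≤ (2 * C * |x - y|) * (x ^ 2 * y ^ 2) := by
          apply mul_le_mul habs h1 (by positivity) (by positivity)
  have h3 : (x ^ 2 - y ^ 2) ^ 2 / (x ^ 2 * y ^ 2) ≤ (2 * C * |x - y|) / (c * w) ^ 2 := by
    rw [div_le_div_iff₀ (by positivity) (by positivity)]
    linarith
  have hid : x ^ 2 / y ^ 2 - 1 + (y ^ 2 / x ^ 2 - 1)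
      = (x ^ 2 - y ^ 2) ^ 2 / (x ^ 2 * y ^ 2) := by
    field_simp [show x ≠ 0 by rintro rfl; simp at hxpos, show y ≠ 0 by rintro rfl; simp at hypos]; ring
  have hw2 : w ^ 2 ≠ 0 := by positivity
  have hc2 : c ≠ 0 := hc.ne'
  have hwne : w ≠ 0 := hw.ne'
  have hPe : P = 1 / w ^ 2 := by
    rw [eq_div_iff hw2]; linarith
  have hR : (2 * C / c ^ 2) * (P * |x - y|) = (2 * C * |x - y|) / (c * w) ^ 2 := by
    rw [hPe, mul_pow]
    ring
  have hB : 0 ≤ (x ^ 2 - y ^ 2) ^ 2 / (x ^ 2 * y ^ 2) := by positivity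
  rw [hR]
  linarith [hlog, h3, hid, hB]

theorem stmt_9 (n : ℕ) (s c C : ℝ) (hs : 0 ≤ s) (hc : 0 < c) (hC : 0 < C)
    (Φ : Matrix (Fin n) (Fin n) ℝ) (hΦ : Φᵀ * Φ = 1)
    (lam0 lam1 : Fin n → ℝ)
    (hlo0 : ∀ ℓ : Fin n, c * (((ℓ : ℕ) : ℝ) + 1) ^ (-(s / 2)) ≤ |lam0 ℓ|)
    (hhi0 : ∀ ℓ : Fin n, |lam0 ℓ| ≤ C)
    (hlo1 : ∀ ℓ : Fin n, c * (((ℓ : ℕ) : ℝ) + 1) ^ (-(s / 2)) ≤ |lam1 ℓ|)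
    (hhi1 : ∀ ℓ : Fin n, |lam1 ℓ| ≤ C) :
    (1 / 2) * (Matrix.trace
        ((Φ * Matrix.diagonal (fun ℓ => lam1 ℓ ^ 2) * Φᵀ)⁻¹
          * (Φ * Matrix.diagonal (fun ℓ => lam0 ℓ ^ 2) * Φᵀ) - 1)
      + Real.log (Φ * Matrix.diagonal (fun ℓ => lam1 ℓ ^ 2) * Φᵀ).det
      - Real.log (Φ * Matrix.diagonal (fun ℓ => lam0 ℓ ^ 2) * Φᵀ).det)
    ≤ (2 * C / c ^ 2) * ∑ ℓ : Fin n, (((ℓ : ℕ) : ℝ) + 1) ^ s * |lam0 ℓ - lam1 ℓ| := by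
  -- basic positivity facts
  have hwpos : ∀ ℓ : Fin n, (0:ℝ) < (((ℓ : ℕ) : ℝ) + 1) ^ (-(s / 2)) := by
    intro ℓ
    exact Real.rpow_pos_of_pos (by positivity) _
  have h0ne : ∀ ℓ : Fin n, lam0 ℓ ≠ 0 := by
    intro ℓ
    intro h
    have := hlo0 ℓ
    rw [h, abs_zero] at this
    nlinarith [hwpos ℓ]
  have h1ne : ∀ ℓ : Fin n, lam1 ℓ ≠ 0 := by
    intro ℓ
    intro h
    have := hlo1 ℓ
    rw [h, abs_zero] at this
    nlinarith [hwpos ℓ]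
  have hΦ' : Φ * Φᵀ = 1 := mul_eq_one_comm.mp hΦ
  have hcancel : ∀ X : Matrix (Fin n) (Fin n) ℝ, Φᵀ * (Φ * X) = X := by
    intro X
    rw [← Matrix.mul_assoc, hΦ, Matrix.one_mul]
  set D0 := Matrix.diagonal (fun ℓ => lam0 ℓ ^ 2) with hD0
  set D1 := Matrix.diagonal (fun ℓ => lam1 ℓ ^ 2) with hD1
  set E := Matrix.diagonal (fun ℓ => (lam1 ℓ ^ 2)⁻¹) with hE
  have hD1E : D1 * E = 1 := by
    rw [hD1, hE, Matrix.diagonal_mul_diagonal]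
    have h : (fun i => lam1 i ^ 2 * (lam1 i ^ 2)⁻¹) = fun _ : Fin n => (1:ℝ) :=
      funext fun i => mul_inv_cancel₀ (pow_ne_zero 2 (h1ne i))
    rw [h, Matrix.diagonal_one]
  have hinv : (Φ * D1 * Φᵀ)⁻¹ = Φ * E * Φᵀ := by
    apply Matrix.inv_eq_right_inv
    calc Φ * D1 * Φᵀ * (Φ * E * Φᵀ)
        = Φ * (D1 * (Φᵀ * (Φ * (E * Φᵀ)))) := by
          simp only [Matrix.mul_assoc]
      _ = Φ * ((D1 * E) * Φᵀ) := by rw [hcancel]; simp only [Matrix.mul_assoc]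
      _ = Φ * Φᵀ := by rw [hD1E, Matrix.one_mul]
      _ = 1 := hΦ'
  -- trace computation
  have htrace : Matrix.trace ((Φ * D1 * Φᵀ)⁻¹ * (Φ * D0 * Φᵀ))
      = ∑ ℓ : Fin n, (lam1 ℓ ^ 2)⁻¹ * lam0 ℓ ^ 2 := by
    rw [hinv]
    have : Φ * E * Φᵀ * (Φ * D0 * Φᵀ) = Φ * (E * D0) * Φᵀ := by
      calc Φ * E * Φᵀ * (Φ * D0 * Φᵀ)
          = Φ * (E * (Φᵀ * (Φ * (D0 * Φᵀ)))) := by simp only [Matrix.mul_assoc]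
        _ = Φ * (E * D0) * Φᵀ := by rw [hcancel]; simp only [Matrix.mul_assoc]
    rw [this, Matrix.trace_mul_cycle, hΦ, Matrix.one_mul, hE, hD0,
      Matrix.diagonal_mul_diagonal, Matrix.trace_diagonal]
  -- determinant computation
  have hdetΦ : Φ.det * Φ.det = 1 := by
    have := congrArg Matrix.det hΦ
    rwa [Matrix.det_mul, Matrix.det_transpose, Matrix.det_one] at this
  have hdet : ∀ D : Matrix (Fin n) (Fin n) ℝ, (Φ * D * Φᵀ).det = D.det := by
    intro D
    rw [Matrix.det_mul, Matrix.det_mul, Matrix.det_transpose]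
    linear_combination D.det * hdetΦ
  have hdet0 : (Φ * D0 * Φᵀ).det = ∏ ℓ : Fin n, lam0 ℓ ^ 2 := by
    rw [hdet, hD0, Matrix.det_diagonal]
  have hdet1 : (Φ * D1 * Φᵀ).det = ∏ ℓ : Fin n, lam1 ℓ ^ 2 := by
    rw [hdet, hD1, Matrix.det_diagonal]
  have hlog0 : Real.log (Φ * D0 * Φᵀ).det = ∑ ℓ : Fin n, Real.log (lam0 ℓ ^ 2) := by
    rw [hdet0]
    exact Real.log_prod (fun ℓ _ => pow_ne_zero 2 (h0ne ℓ))
  have hlog1 : Real.log (Φ * D1 * Φᵀ).det = ∑ ℓ : Fin n, Real.log (lam1 ℓ ^ 2) := by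
    rw [hdet1]
    exact Real.log_prod (fun ℓ _ => pow_ne_zero 2 (h1ne ℓ))
  have htr1 : Matrix.trace ((Φ * D1 * Φᵀ)⁻¹ * (Φ * D0 * Φᵀ) - 1)
      = ∑ ℓ : Fin n, ((lam1 ℓ ^ 2)⁻¹ * lam0 ℓ ^ 2 - 1) := by
    rw [Matrix.trace_sub, htrace, Matrix.trace_one, Finset.sum_sub_distrib]
    simp
  have hmain : Matrix.trace ((Φ * D1 * Φᵀ)⁻¹ * (Φ * D0 * Φᵀ) - 1)
      + Real.log (Φ * D1 * Φᵀ).det - Real.log (Φ * D0 * Φᵀ).det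
      = ∑ ℓ : Fin n, (lam0 ℓ ^ 2 / lam1 ℓ ^ 2 - 1
          + Real.log (lam1 ℓ ^ 2) - Real.log (lam0 ℓ ^ 2)) := by
    rw [htr1, hlog0, hlog1, ← Finset.sum_add_distrib, ← Finset.sum_sub_distrib]
    apply Finset.sum_congr rfl
    intro ℓ _
    rw [inv_mul_eq_div]
  rw [hmain, Finset.mul_sum, Finset.mul_sum]
  apply Finset.sum_le_sum
  intro ℓ _
  have hP : ((((ℓ : ℕ) : ℝ) + 1) ^ (-(s / 2))) ^ 2 * (((ℓ : ℕ) : ℝ) + 1) ^ s = 1 := by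
    have hX : (0:ℝ) < ((ℓ : ℕ) : ℝ) + 1 := by positivity
    rw [← Real.rpow_natCast ((((ℓ : ℕ) : ℝ) + 1) ^ (-(s / 2))) 2,
      ← Real.rpow_mul hX.le, ← Real.rpow_add hX]
    norm_num
  have := kl_term_bound c C (lam0 ℓ) (lam1 ℓ) ((((ℓ : ℕ) : ℝ) + 1) ^ (-(s / 2)))
    ((((ℓ : ℕ) : ℝ) + 1) ^ s) hc hC (hwpos ℓ) hP (hlo0 ℓ) (hhi0 ℓ) (hlo1 ℓ) (hhi1 ℓ)
  calc (1 / 2) * (lam0 ℓ ^ 2 / lam1 ℓ ^ 2 - 1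
        + Real.log (lam1 ℓ ^ 2) - Real.log (lam0 ℓ ^ 2))
      ≤ (2 * C / c ^ 2) * ((((ℓ : ℕ) : ℝ) + 1) ^ s * |lam0 ℓ - lam1 ℓ|) := this
    _ = 2 * C / c ^ 2 * ((((ℓ : ℕ) : ℝ) + 1) ^ s * |lam0 ℓ - lam1 ℓ|) := rfl
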